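/- Let α, β > 0 with α + β = 1, I = [a,b] with a < b, and Γ = ([a,b] × {b}) ∪ ({a} × [a,b]). Every continuous f : I → ℝ satisfying f(αx + βy) = αf(x) + βf(y) for all (x,y) ∈ Γ (the equation restricted to the boundary set Γ) is of the form f(z) = λz + μ; in particular, f is uniquely determined by its values at a and b. -/

import Mathlib

lemma jensen_key {α β a b : ℝ} (hα : 0 < α) (hβ : 0 < β) (hαβ : α + β = 1)
    (hab : a < b) (h : ℝ → ℝ) (hc : ContinuousOn h (Set.Icc a b))
    (heq : ∀ x ∈ Set.Icc a b, h (α * x + β * b) = α * h x ∧ h (α * a + β * x) = β * h x) :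
    ∀ z ∈ Set.Icc a b, h z = 0 := by
  have hK : IsCompact (Set.Icc a b) := isCompact_Icc
  have hne : (Set.Icc a b).Nonempty := Set.nonempty_Icc.2 hab.le
  obtain ⟨z0, hz0, hmax⟩ := hK.exists_isMaxOn hne hc.abs
  have hzero : |h z0| = 0 := by
    obtain ⟨hz0a, hz0b⟩ := hz0
    by_cases hcase : α * a + β * b ≤ z0
    · set x := (z0 - β * b) / α with hx_def
      have hsum : α * b + β * b = b := by rw [← add_mul, hαβ, one_mul]
      have hx : x ∈ Set.Icc a b := by
        constructor
        · rw [le_div_iff₀ hα]; linarith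
        · rw [div_le_iff₀ hα]; linarith
      have hrepr : α * x + β * b = z0 := by
        rw [hx_def, mul_div_cancel₀ _ hα.ne']; ring
      have he := (heq x hx).1
      rw [hrepr] at he
      have hle : |h x| ≤ |h z0| := hmax hx
      have : |h z0| = α * |h x| := by rw [he, abs_mul, abs_of_pos hα]
      nlinarith [abs_nonneg (h z0), abs_nonneg (h x)]
    · push_neg at hcase
      set x := (z0 - α * a) / β with hx_def
      have hsum : α * a + β * a = a := by rw [← add_mul, hαβ, one_mul]
      have hsum' : α * a + β * b ≤ b := by nlinarith
      have hx : x ∈ Set.Icc a b := by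
        constructor
        · rw [le_div_iff₀ hβ]; linarith
        · rw [div_le_iff₀ hβ]; nlinarith
      have hrepr : α * a + β * x = z0 := by
        rw [hx_def, mul_div_cancel₀ _ hβ.ne']; ring
      have he := (heq x hx).2
      rw [hrepr] at he
      have hle : |h x| ≤ |h z0| := hmax hx
      have : |h z0| = β * |h x| := by rw [he, abs_mul, abs_of_pos hβ]
      nlinarith [abs_nonneg (h z0), abs_nonneg (h x)]
  intro z hz
  have hle : |h z| ≤ |h z0| := hmax hz
  rw [hzero] at hle
  exact abs_eq_zero.mp (le_antisymm hle (abs_nonneg _))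

theorem jensen_overdetermined
    {α β a b : ℝ} (hα : 0 < α) (hβ : 0 < β) (hαβ : α + β = 1) (hab : a < b)
    (f : ℝ → ℝ) (hf : ContinuousOn f (Set.Icc a b))
    (heq : ∀ x ∈ Set.Icc a b,
      f (α * x + β * b) = α * f x + β * f b ∧
      f (α * a + β * x) = α * f a + β * f x) :
    (∃ lam mu : ℝ, ∀ z ∈ Set.Icc a b, f z = lam * z + mu) ∧
    ∀ g : ℝ → ℝ, ContinuousOn g (Set.Icc a b) →
      (∀ x ∈ Set.Icc a b,
        g (α * x + β * b) = α * g x + β * g b ∧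
        g (α * a + β * x) = α * g a + β * g x) →
      g a = f a → g b = f b → ∀ z ∈ Set.Icc a b, g z = f z := by
  have hba : b - a ≠ 0 := by linarith
  constructor
  · set lam := (f b - f a) / (b - a) with hlam
    set mu := f a - lam * a with hmu
    refine ⟨lam, mu, ?_⟩
    set h := fun z => f z - (lam * z + mu) with hh
    have hLb : lam * b + mu = f b := by
      rw [hmu, hlam]; field_simp; ring
    have hLa : lam * a + mu = f a := by rw [hmu]; ring
    have hc : ContinuousOn h (Set.Icc a b) := by
      apply hf.sub; fun_prop
    have heq' : ∀ x ∈ Set.Icc a b,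
        h (α * x + β * b) = α * h x ∧ h (α * a + β * x) = β * h x := by
      intro x hx
      obtain ⟨h1, h2⟩ := heq x hx
      constructor
      · simp only [hh, h1]; linear_combination -β * hLb + mu * hαβ
      · simp only [hh, h2]; linear_combination -α * hLa + mu * hαβ
    intro z hz
    have := jensen_key hα hβ hαβ hab h hc heq' z hz
    simp only [hh] at this
    linarith
  · intro g hg hgeq hga hgb z hz
    set h := fun z => g z - f z with hh
    have hc : ContinuousOn h (Set.Icc a b) := hg.sub hf
    have heq' : ∀ x ∈ Set.Icc a b,
        h (α * x + β * b) = α * h x ∧ h (α * a + β * x) = β * h x := by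
      intro x hx
      obtain ⟨h1, h2⟩ := heq x hx
      obtain ⟨g1, g2⟩ := hgeq x hx
      constructor
      · simp only [hh, h1, g1, hgb]; ring
      · simp only [hh, h2, g2, hga]; ring
    have := jensen_key hα hβ hαβ hab h hc heq' z hz
    simp only [hh] at this
    linarith
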